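/- arXiv:2010.13405 — 2 statements merged into one kernel-verified Lean document; each statement's English description precedes it below -/
import Mathlib

section
/- Let d ≥ 1, a ∈ ℝ, c > 0, γ ∈ (0,1], and let f : [0,1]^d → ℝ be a convex (c,γ)-Hölder function whose level set {f = a} is Δ-proper for some Δ > 0. Then there exists a constant C* > 0 such that for every r ∈ (0,1), the packing number satisfies N({x ∈ [0,1]^d : |f(x) − a| ≤ r}, r) ≤ C*·(1/r)^{d−1}. -/
noncomputable section

/-- The unit hypercube `[0,1]^d`, as a subset of `Fin d → ℝ` (equipped with the sup-norm). -/
def unitCube (d : ℕ) : Set (Fin d → ℝ) := Set.Icc 0 1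

/-- The `r`-packing number of `E ⊆ [0,1]^d` with respect to the sup-norm. -/
noncomputable def packingNumber {d : ℕ} (E : Set (Fin d → ℝ)) (r : ℝ) : ℕ :=
  sSup {k : ℕ | ∃ x : Fin k → (Fin d → ℝ), (∀ i, x i ∈ E) ∧
    ∀ i j, i ≠ j → r < dist (x i) (x j)}

/-- `f` is `(c,γ)`-Hölder on `E` with respect to the sup-norm. -/
def HolderOn (d : ℕ) (c γ : ℝ) (E : Set (Fin d → ℝ)) (f : (Fin d → ℝ) → ℝ) : Prop :=
  ∀ x ∈ E, ∀ y ∈ E, |f x - f y| ≤ c * ‖x - y‖ ^ γ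

/-- The level set `{f = a}` is `Δ`-proper: it is nonempty, `min f + Δ ≤ a`, and
`a ≤ min_{∂[0,1]^d} f`. -/
def ProperLevelSet (d : ℕ) (f : (Fin d → ℝ) → ℝ) (a Δ : ℝ) : Prop :=
  (∃ x ∈ unitCube d, f x = a) ∧ (∃ x ∈ unitCube d, f x + Δ ≤ a) ∧
  ∀ x ∈ frontier (unitCube d), a ≤ f x

private lemma int_eq_of_zmod {n : ℕ} {x y : ℤ} (h : (x : ZMod n) = y) (hlt : |x - y| < n) :
    x = y := by
  by_contra hne
  have hdvd : (n : ℤ) ∣ y - x := (ZMod.intCast_eq_intCast_iff _ _ _|>.mp h).dvd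
  have h0 : y - x ≠ 0 := sub_ne_zero.mpr (Ne.symm hne)
  have := Int.le_of_dvd (abs_pos.mpr h0) ((dvd_abs _ _).mpr hdvd)
  rw [abs_sub_comm] at hlt
  omega

private lemma floor_eq_dist_lt {r a b : ℝ} (hr : 0 < r) (h : ⌊a / r⌋ = ⌊b / r⌋) :
    |a - b| < r := by
  have key : ∀ u v : ℝ, u / r - v / r < 1 → u - v < r := by
    intro u v h'
    have h2 : (u - v) / r < 1 := by rw [sub_div]; exact h'
    linarith [(div_lt_one hr).mp h2]
  have h1 := Int.floor_le (a / r)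
  have h2 := Int.lt_floor_add_one (a / r)
  have h3 := Int.floor_le (b / r)
  have h4 := Int.lt_floor_add_one (b / r)
  rw [h] at h1 h2
  rw [abs_sub_lt_iff]
  exact ⟨key a b (by linarith), key b a (by linarith)⟩

private lemma floor_diff_le {r a b M : ℝ} (hr : 0 < r) (h : |a - b| ≤ M) :
    |(⌊a / r⌋ : ℝ) - (⌊b / r⌋ : ℝ)| ≤ M / r + 1 := by
  have h1 := Int.floor_le (a / r)
  have h2 := Int.lt_floor_add_one (a / r)
  have h3 := Int.floor_le (b / r)
  have h4 := Int.lt_floor_add_one (b / r)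
  obtain ⟨ha, hb⟩ := abs_le.mp h
  have hd1 : a / r - b / r ≤ M / r := by
    rw [← sub_div]; exact (div_le_div_iff_of_pos_right hr).mpr hb
  have hd2 : b / r - a / r ≤ M / r := by
    rw [← sub_div]; exact (div_le_div_iff_of_pos_right hr).mpr (by linarith)
  rw [abs_le]
  constructor <;> linarith

/-- clamp to [0,1] is a contraction towards points of [0,1] -/
private lemma clamp_close {s t : ℝ} (h0 : 0 ≤ t) (h1 : t ≤ 1) :
    |max 0 (min 1 s) - t| ≤ |s - t| := by
  rcases le_total s 0 with hs | hs
  · rw [max_eq_left (by simp [min_le_iff]; right; exact hs), abs_of_nonpos (by linarith),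
      abs_of_nonpos (by linarith)]
    linarith
  · rcases le_total s 1 with hs1 | hs1
    · rw [min_eq_right hs1, max_eq_right hs]
    · rw [min_eq_left hs1, max_eq_right (by norm_num)]
      rw [abs_of_nonneg (by linarith), abs_of_nonneg (by linarith)]
      linarith

/-- an enumeration of the coordinates different from `j` -/
private def emb (d : ℕ) (j : Fin d) (l : Fin (d - 1)) : Fin d :=
  if h : (l : ℕ) < (j : ℕ) then ⟨l, by omega⟩ else ⟨(l : ℕ) + 1, by have := l.2; omega⟩

private lemma emb_surj {d : ℕ} (j m : Fin d) (hm : m ≠ j) : ∃ l : Fin (d - 1), emb d j l = m := by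
  have hj := j.2
  have hm2 := m.2
  have hne : (m : ℕ) ≠ (j : ℕ) := fun h => hm (Fin.ext h)
  rcases lt_or_gt_of_ne hne with h | h
  · exact ⟨⟨m, by omega⟩, by simp [emb, h]⟩
  · refine ⟨⟨(m : ℕ) - 1, by omega⟩, ?_⟩
    have : ¬ ((m : ℕ) - 1 < (j : ℕ)) := by omega
    simp only [emb, this, dif_neg, not_false_iff]
    exact Fin.ext (by simp; omega)

set_option maxHeartbeats 1000000 in
/-- For a convex `(c,γ)`-Hölder function with a `Δ`-proper level set, there
is `C* > 0` such that for every `r ∈ (0,1)`,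
`N({x : |f(x) - a| ≤ r}, r) ≤ C* (1/r)^{d-1}`. -/
theorem stmt13 (d : ℕ) (hd : 1 ≤ d) (a c γ Δ : ℝ) (hc : 0 < c)
    (hγ : γ ∈ Set.Ioc (0 : ℝ) 1) (hΔ : 0 < Δ) (f : (Fin d → ℝ) → ℝ)
    (hconv : ConvexOn ℝ (unitCube d) f)
    (hhold : HolderOn d c γ (unitCube d) f)
    (hproper : ProperLevelSet d f a Δ) :
    ∃ Cstar : ℝ, 0 < Cstar ∧ ∀ r ∈ Set.Ioo (0 : ℝ) 1,
      (packingNumber {x ∈ unitCube d | |f x - a| ≤ r} r : ℝ) ≤ Cstar * (1 / r) ^ (d - 1) := by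
  obtain ⟨hγ0, hγ1⟩ := hγ
  obtain ⟨-, ⟨x0, hx0c, hx0f⟩, hbd⟩ := hproper
  -- basic constants
  set ρ0 : ℝ := (Δ / c) ^ (1 / γ) with hρ0def
  have hρ0pos : 0 < ρ0 := Real.rpow_pos_of_pos (div_pos hΔ hc) _
  set ρ : ℝ := ρ0 / 2 with hρdef
  have hρpos : 0 < ρ := by positivity
  have hρ0γ : c * ρ0 ^ γ = Δ := by
    rw [hρ0def, one_div, Real.rpow_inv_rpow (le_of_lt (div_pos hΔ hc)) hγ0.ne']
    field_simp
  have hργ : c * ρ ^ γ ≤ Δ := by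
    calc c * ρ ^ γ ≤ c * ρ0 ^ γ :=
          mul_le_mul_of_nonneg_left
            (Real.rpow_le_rpow (by positivity) (by rw [hρdef]; linarith) hγ0.le) hc.le
      _ = Δ := hρ0γ
  have hcl : IsClosed (unitCube d) := by rw [unitCube]; exact isClosed_Icc
  -- coordinates of cube points
  have hcoord : ∀ z ∈ unitCube d, ∀ l, 0 ≤ z l ∧ z l ≤ 1 := by
    intro z hz l
    obtain ⟨h0, h1⟩ := hz
    exact ⟨h0 l, h1 l⟩
  -- distance within the cube is at most 1
  have hdist1 : ∀ p ∈ unitCube d, ∀ q ∈ unitCube d, ‖p - q‖ ≤ 1 := by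
    intro p hp q hq
    rw [pi_norm_le_iff_of_nonneg zero_le_one]
    intro l
    rw [Pi.sub_apply, Real.norm_eq_abs, abs_le]
    obtain ⟨hp0, hp1⟩ := hcoord p hp l
    obtain ⟨hq0, hq1⟩ := hcoord q hq l
    constructor <;> linarith
  -- the sup-ball of radius ρ around x0 is inside the cube and sub-level a
  have hfx0 : f x0 ≤ a - Δ := by linarith
  have hfar : ∀ w ∈ frontier (unitCube d), ρ0 ≤ ‖w - x0‖ := by
    intro w hw
    have hwc : w ∈ unitCube d := by
      have h := frontier_subset_closure (s := unitCube d) hw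
      rwa [hcl.closure_eq] at h
    have haw : a ≤ f w := hbd w hw
    have hH := hhold w hwc x0 hx0c
    have hΔle : Δ ≤ c * ‖w - x0‖ ^ γ :=
      le_trans (le_trans (by linarith) (le_abs_self (f w - f x0))) hH
    have h1 : Δ / c ≤ ‖w - x0‖ ^ γ := (div_le_iff₀' hc).mpr hΔle
    have h2 : (Δ / c) ^ (1 / γ) ≤ (‖w - x0‖ ^ γ) ^ (1 / γ) :=
      Real.rpow_le_rpow (by positivity) h1 (by positivity)
    rw [one_div, Real.rpow_rpow_inv (norm_nonneg _) hγ0.ne'] at h2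
    rw [hρ0def, one_div]
    exact h2
  have hintcube : interior (unitCube d) = Set.pi Set.univ (fun _ => Set.Ioo (0:ℝ) 1) := by
    rw [show unitCube d = Set.pi Set.univ (fun _ => Set.Icc (0:ℝ) 1) from
        (Set.pi_univ_Icc (fun _ => (0:ℝ)) (fun _ => (1:ℝ))).symm,
      interior_pi_set Set.finite_univ]
    simp [interior_Icc]
  have hball : ∀ z : Fin d → ℝ, ‖z - x0‖ ≤ ρ → z ∈ unitCube d ∧ f z ≤ a := by
    intro z hz
    have hzc : z ∈ unitCube d := by
      by_contra hzc
      have hzc' : ¬ (∀ l, 0 ≤ z l ∧ z l ≤ 1) := fun hall =>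
        hzc ⟨fun l => (hall l).1, fun l => (hall l).2⟩
      push_neg at hzc'
      obtain ⟨l0, hl0⟩ := hzc'
      set w : Fin d → ℝ := fun l => max 0 (min 1 (z l)) with hwdef
      have hwc : w ∈ unitCube d := by
        constructor
        · intro l; exact le_max_left _ _
        · intro l; exact max_le zero_le_one (min_le_left _ _)
      have hwl0 : w l0 = 0 ∨ w l0 = 1 := by
        rcases lt_or_ge (z l0) 0 with h | h
        · left
          rw [hwdef]
          simp only [max_eq_left_iff]
          rw [min_eq_right (by linarith)]
          linarith
        · right
          have h1 : 1 < z l0 := hl0 h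
          rw [hwdef]
          simp only
          rw [min_eq_left (by linarith), max_eq_right zero_le_one]
      have hwf : w ∈ frontier (unitCube d) := by
        rw [hcl.frontier_eq]
        refine ⟨hwc, fun hint => ?_⟩
        rw [hintcube] at hint
        have := hint l0 (Set.mem_univ _)
        rcases hwl0 with h | h <;> rw [h] at this <;>
          simp only [Set.mem_Ioo] at this <;> linarith [this.1, this.2]
      have hwz : ‖w - x0‖ ≤ ‖z - x0‖ := by
        rw [pi_norm_le_iff_of_nonneg (norm_nonneg _)]
        intro l
        rw [Pi.sub_apply, Real.norm_eq_abs]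
        obtain ⟨h0, h1⟩ := hcoord x0 hx0c l
        calc |w l - x0 l| ≤ |z l - x0 l| := clamp_close h0 h1
          _ ≤ ‖z - x0‖ := by
              have := norm_le_pi_norm (z - x0) l
              rwa [Pi.sub_apply, Real.norm_eq_abs] at this
      have := hfar w hwf
      have : ρ0 ≤ ρ := le_trans this (le_trans hwz hz)
      rw [hρdef] at this
      linarith
    refine ⟨hzc, ?_⟩
    have hH := hhold z hzc x0 hx0c
    have h1 : f z - f x0 ≤ c * ‖z - x0‖ ^ γ := le_trans (le_abs_self _) hH
    have h2 : c * ‖z - x0‖ ^ γ ≤ c * ρ ^ γ :=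
      mul_le_mul_of_nonneg_left (Real.rpow_le_rpow (norm_nonneg _) hz hγ0.le) hc.le
    linarith
  -- counting constants
  set C4 : ℝ := 4 / Δ + 1 / ρ + 1 with hC4def
  have hC4pos : 0 < C4 := by positivity
  set B : ℕ := ⌈C4⌉₊ + 3 with hBdef
  set B2 : ℕ := ⌈2 / Δ⌉₊ + 3 with hB2def
  set Cst : ℝ := (d : ℝ) * (2 * (7 ^ (d - 1) * (B : ℝ) ^ d)) + (B2 : ℝ) ^ d with hCstdef
  have hBpos : (0:ℝ) < (B : ℝ) := by
    have : 0 < B := by omega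
    exact_mod_cast this
  have hB2pos : (0:ℝ) < (B2 : ℝ) := by
    have : 0 < B2 := by omega
    exact_mod_cast this
  have hCstpos : 0 < Cst := by
    have h1 : (0:ℝ) ≤ (d : ℝ) * (2 * (7 ^ (d - 1) * (B : ℝ) ^ d)) := by positivity
    have h2 : (0:ℝ) < (B2 : ℝ) ^ d := by positivity
    rw [hCstdef]; linarith
  refine ⟨Cst, hCstpos, ?_⟩
  rintro r ⟨hr0, hr1⟩
  have hrinv : 1 ≤ 1 / r := by rw [le_div_iff₀ hr0]; linarith
  have hpowinv : (1:ℝ) ≤ (1 / r) ^ (d - 1) := one_le_pow₀ hrinv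
  -- the key counting estimate
  have hcount : ∀ (k : ℕ) (x : Fin k → Fin d → ℝ),
      (∀ i, x i ∈ {x ∈ unitCube d | |f x - a| ≤ r}) →
      (∀ i j, i ≠ j → r < dist (x i) (x j)) → (k : ℝ) ≤ Cst * (1 / r) ^ (d - 1) := by
    intro k x hxEmem hxsep
    have hxc : ∀ i, x i ∈ unitCube d := fun i => (hxEmem i).1
    have hxlo : ∀ i, a - r ≤ f (x i) := by
      intro i
      have h := (hxEmem i).2
      rw [abs_le] at h
      linarith [h.1]
    have hxhi : ∀ i, f (x i) ≤ a + r := by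
      intro i
      have h := (hxEmem i).2
      rw [abs_le] at h
      linarith [h.2]
    by_cases hsmall : r < Δ / 2
    · -- main branch : r < Δ/2
      classical
      set t : (Fin d → ℝ) → ℝ := fun p => ‖p - x0‖ with htdef
      set u : (Fin d → ℝ) → (Fin d → ℝ) := fun p => (t p)⁻¹ • (p - x0) with hudef
      have htnonneg : ∀ p, 0 ≤ t p := fun p => norm_nonneg _
      have htpos : ∀ i, 0 < t (x i) := by
        intro i
        rcases (htnonneg (x i)).lt_or_eq with h | h
        · exact h
        · exfalso
          have h0 : ‖x i - x0‖ = 0 := h.symm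
          have hxeq : x i = x0 := by
            rw [norm_eq_zero, sub_eq_zero] at h0; exact h0
          have h1 := hxlo i
          rw [hxeq] at h1
          linarith
      have htle1 : ∀ i, t (x i) ≤ 1 := fun i => hdist1 _ (hxc i) _ hx0c
      have hsm : ∀ i, t (x i) • u (x i) = x i - x0 := fun i =>
        smul_inv_smul₀ (htpos i).ne' _
      have hcoordsm : ∀ i l, x i l = x0 l + t (x i) * u (x i) l := by
        intro i l
        have h := congrFun (hsm i) l
        rw [Pi.smul_apply, smul_eq_mul, Pi.sub_apply] at h
        linarith
      have hunorm : ∀ i, ‖u (x i)‖ = 1 := by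
        intro i
        have : u (x i) = (t (x i))⁻¹ • (x i - x0) := rfl
        rw [this, norm_smul, norm_inv, Real.norm_eq_abs, abs_of_pos (htpos i)]
        have htn : ‖x i - x0‖ = t (x i) := rfl
        rw [htn]
        exact inv_mul_cancel₀ (htpos i).ne'
      have hucoordle : ∀ i l, |u (x i) l| ≤ 1 := by
        intro i l
        have h := norm_le_pi_norm (u (x i)) l
        rw [Real.norm_eq_abs, hunorm i] at h
        exact h
      have hKconv : Convex ℝ {z ∈ unitCube d | f z ≤ a + r} := hconv.convex_le _
      have hρr : 0 < ρ + r := by linarith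
      have hkey : ∀ i i', ‖u (x i) - u (x i')‖ ≤ r →
          t (x i') - t (x i) ≤ 4 / Δ * r + 1 / ρ * r := by
        intro i i' huu
        set lam : ℝ := ρ / (ρ + r) with hlamdef
        have hlam0 : 0 < lam := div_pos hρpos hρr
        have hlam1 : lam < 1 := by rw [hlamdef, div_lt_one hρr]; linarith
        have h1mlam : 1 - lam = r / (ρ + r) := by rw [hlamdef]; field_simp; ring
        set b := x0 + (ρ / r) • (t (x i') • u (x i) - (x i' - x0)) with hbdef
        have hbball : ‖b - x0‖ ≤ ρ := by
          have hbeq : b - x0 = (ρ / r) • (t (x i') • (u (x i) - u (x i'))) := by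
            rw [hbdef, smul_sub (t (x i')), hsm i']
            abel
          rw [hbeq, norm_smul, norm_smul, Real.norm_eq_abs, Real.norm_eq_abs,
            abs_of_pos (div_pos hρpos hr0), abs_of_pos (htpos i')]
          calc ρ / r * (t (x i') * ‖u (x i) - u (x i')‖) ≤ ρ / r * (1 * r) := by
                apply mul_le_mul_of_nonneg_left _ (by positivity)
                exact mul_le_mul (htle1 i') huu (norm_nonneg _) zero_le_one
            _ = ρ := by field_simp
        obtain ⟨hbc, hbf⟩ := hball b hbball
        set w' := lam • (x i') + (1 - lam) • b with hw'def
        have hw'K : w' ∈ {z ∈ unitCube d | f z ≤ a + r} :=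
          hKconv ⟨hxc i', hxhi i'⟩ ⟨hbc, by linarith⟩ hlam0.le (by linarith) (by ring)
        have hw'c : w' ∈ unitCube d := hw'K.1
        have hw'f : f w' ≤ a + r := hw'K.2
        have hw'co : ∀ l, w' l = x0 l + (lam * t (x i')) * u (x i) l := by
          intro l
          rw [hw'def, hbdef]
          simp only [Pi.add_apply, Pi.smul_apply, Pi.sub_apply, smul_eq_mul]
          rw [hlamdef]
          field_simp
          ring
        rcases le_or_gt (lam * t (x i')) (t (x i)) with hA | hB
        · have h1 : t (x i') - t (x i) ≤ (1 - lam) * t (x i') := by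
            have : (1 - lam) * t (x i') = t (x i') - lam * t (x i') := by ring
            rw [this]
            linarith
          have h2 : (1 - lam) * t (x i') ≤ 1 - lam := by
            have := mul_le_mul_of_nonneg_left (htle1 i') (by linarith : (0:ℝ) ≤ 1 - lam)
            linarith
          have h3 : 1 - lam ≤ r / ρ := by
            rw [h1mlam]
            apply div_le_div_of_nonneg_left hr0.le hρpos (by linarith)
          have h4 : r / ρ = 1 / ρ * r := by ring
          have h5 : 0 ≤ 4 / Δ * r := by positivity
          linarith
        · set ν : ℝ := t (x i) / (lam * t (x i')) with hνdef
          have hltq : 0 < lam * t (x i') := mul_pos hlam0 (htpos i')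
          have hν0 : 0 < ν := div_pos (htpos i) hltq
          have hν1 : ν < 1 := (div_lt_one hltq).mpr hB
          have hνeq : ν * (lam * t (x i')) = t (x i) := div_mul_cancel₀ _ hltq.ne'
          have hcomb : x i = (1 - ν) • x0 + ν • w' := by
            funext l
            rw [Pi.add_apply, Pi.smul_apply, Pi.smul_apply, smul_eq_mul, smul_eq_mul,
              hw'co l, hcoordsm i l]
            linear_combination (u (x i) l) * hνeq.symm
          have hcvx := hconv.2 hx0c hw'c (by linarith : (0:ℝ) ≤ 1 - ν) hν0.le
            (by ring : (1 - ν) + ν = 1)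
          rw [← hcomb] at hcvx
          have hineq : a - r ≤ (1 - ν) * (a - Δ) + ν * (a + r) := by
            calc a - r ≤ f (x i) := hxlo i
              _ ≤ (1 - ν) * f x0 + ν * f w' := hcvx
              _ ≤ (1 - ν) * (a - Δ) + ν * (a + r) := by nlinarith
          have hd1 : (1 - ν) * Δ ≤ 2 * r := by nlinarith
          have hd2 : lam * t (x i') - t (x i) ≤ 2 * r / Δ := by
            have hstep : lam * t (x i') - t (x i) = (1 - ν) * (lam * t (x i')) := by
              rw [← hνeq]; ring
            rw [hstep]
            have hle1 : lam * t (x i') ≤ 1 := by nlinarith [htle1 i', htpos i']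
            have hh1 : (1 - ν) * (lam * t (x i')) ≤ (1 - ν) * 1 :=
              mul_le_mul_of_nonneg_left hle1 (by linarith)
            have hh2 : (1 - ν) ≤ 2 * r / Δ := by rw [le_div_iff₀ hΔ]; linarith
            linarith
          have hd3 : t (x i') - lam * t (x i') ≤ r / ρ := by
            have he : t (x i') - lam * t (x i') = (1 - lam) * t (x i') := by ring
            rw [he, h1mlam]
            calc r / (ρ + r) * t (x i') ≤ r / (ρ + r) * 1 :=
                  mul_le_mul_of_nonneg_left (htle1 i') (by positivity)
              _ = r / (ρ + r) := by ring
              _ ≤ r / ρ := div_le_div_of_nonneg_left hr0.le hρpos (by linarith)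
          have hd4 : 2 * r / Δ ≤ 4 / Δ * r := by
            have he : 2 * r / Δ = 2 / Δ * r := by ring
            have he2 : 4 / Δ * r = 2 / Δ * r + 2 / Δ * r := by ring
            have hpos : 0 ≤ 2 / Δ * r := by positivity
            rw [he, he2]
            linarith
          have h4 : r / ρ = 1 / ρ * r := by ring
          linarith
      have hclose : ∀ i i', ‖u (x i) - u (x i')‖ ≤ r → dist (x i) (x i') ≤ C4 * r := by
        intro i i' huu
        have h1 := hkey i i' huu
        have h2 := hkey i' i (by rwa [norm_sub_rev])
        have habs : |t (x i) - t (x i')| ≤ 4 / Δ * r + 1 / ρ * r :=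
          abs_sub_le_iff.mpr ⟨by linarith, by linarith⟩
        have hvec : x i - x i' =
            (t (x i) - t (x i')) • u (x i) + t (x i') • (u (x i) - u (x i')) := by
          rw [sub_smul, smul_sub, hsm i, hsm i']
          abel
        rw [dist_eq_norm, hvec]
        calc ‖(t (x i) - t (x i')) • u (x i) + t (x i') • (u (x i) - u (x i'))‖
            ≤ ‖(t (x i) - t (x i')) • u (x i)‖ + ‖t (x i') • (u (x i) - u (x i'))‖ :=
              norm_add_le _ _
          _ = |t (x i) - t (x i')| * ‖u (x i)‖ + |t (x i')| * ‖u (x i) - u (x i')‖ := by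
              rw [norm_smul (t (x i) - t (x i')) (u (x i)),
                norm_smul (t (x i')) (u (x i) - u (x i')), Real.norm_eq_abs, Real.norm_eq_abs]
          _ ≤ (4 / Δ * r + 1 / ρ * r) * 1 + 1 * r := by
              apply add_le_add
              · rw [hunorm i, mul_one, mul_one]; exact habs
              · rw [abs_of_pos (htpos i')]
                exact mul_le_mul (htle1 i') huu (norm_nonneg _) zero_le_one
          _ = C4 * r := by rw [hC4def]; ring
      set B' : ℕ := 2 * ⌈1 / r⌉₊ + 3 with hB'def
      haveI : NeZero B' := ⟨by omega⟩
      haveI : NeZero B := ⟨by omega⟩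
      have hargmax : ∀ i : Fin k, ∃ jmi : Fin d, ∀ l, |u (x i) l| ≤ |u (x i) jmi| := by
        intro i
        obtain ⟨jmi, -, hjj⟩ := Finset.exists_max_image Finset.univ (fun l => |u (x i) l|)
          ⟨⟨0, hd⟩, Finset.mem_univ _⟩
        exact ⟨jmi, fun l => hjj l (Finset.mem_univ l)⟩
      choose jm hjm using hargmax
      have hjval : ∀ i, |u (x i) (jm i)| = 1 := by
        intro i
        apply le_antisymm
        · have h := norm_le_pi_norm (u (x i)) (jm i)
          rw [Real.norm_eq_abs, hunorm i] at h
          exact h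
        · have h1 : ‖u (x i)‖ ≤ |u (x i) (jm i)| := by
            rw [pi_norm_le_iff_of_nonneg (abs_nonneg _)]
            intro l
            rw [Real.norm_eq_abs]
            exact hjm i l
          rw [hunorm i] at h1
          exact h1
      set Φ : Fin k → Fin d × Bool × (Fin (d - 1) → ZMod B') × (Fin d → ZMod B) := fun i =>
        (jm i, decide (0 ≤ u (x i) (jm i)),
          fun l => ((⌊u (x i) (emb d (jm i) l) / r⌋ : ℤ) : ZMod B'),
          fun l => ((⌊x i l / r⌋ : ℤ) : ZMod B)) with hΦdef
      have hinj : Function.Injective Φ := by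
        intro i i' hEq
        by_contra hne
        rw [hΦdef] at hEq
        simp only [Prod.mk.injEq] at hEq
        obtain ⟨hj, hs, hg, hh⟩ := hEq
        rw [← hj] at hs hg
        have hucl : ‖u (x i) - u (x i')‖ ≤ r := by
          rw [pi_norm_le_iff_of_nonneg hr0.le]
          intro l
          rw [Pi.sub_apply, Real.norm_eq_abs]
          by_cases hl : l = jm i
          · rw [hl]
            have h1 := hjval i
            have h2 := hjval i'
            rw [← hj] at h2
            have hsgn : (0 ≤ u (x i) (jm i)) ↔ (0 ≤ u (x i') (jm i)) := decide_eq_decide.mp hs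
            rcases (abs_eq zero_le_one).mp h1 with hv | hv <;>
              rcases (abs_eq zero_le_one).mp h2 with hv' | hv'
            · rw [hv, hv']; simp; exact hr0.le
            · exfalso; rw [hv, hv'] at hsgn; have := hsgn.mp zero_le_one; linarith
            · exfalso; rw [hv, hv'] at hsgn; have := hsgn.mpr zero_le_one; linarith
            · rw [hv, hv']; simp; exact hr0.le
          · obtain ⟨l', hl'⟩ := emb_surj (jm i) l hl
            have hgl := congrFun hg l'
            have hfl : ⌊u (x i) (emb d (jm i) l') / r⌋ = ⌊u (x i') (emb d (jm i) l') / r⌋ := by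
              apply int_eq_of_zmod hgl
              have hco : |u (x i) (emb d (jm i) l') - u (x i') (emb d (jm i) l')| ≤ 2 := by
                have a1 := hucoordle i (emb d (jm i) l')
                have a2 := hucoordle i' (emb d (jm i) l')
                rw [abs_le] at a1 a2 ⊢
                constructor <;> linarith [a1.1, a1.2, a2.1, a2.2]
              have hfd := floor_diff_le hr0 hco
              have hceil : (1:ℝ) / r ≤ (⌈1/r⌉₊ : ℝ) := Nat.le_ceil _
              have h2r : (2:ℝ) / r = 2 * (1/r) := by ring
              have hreal : |(⌊u (x i) (emb d (jm i) l') / r⌋ : ℝ) -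
                  (⌊u (x i') (emb d (jm i) l') / r⌋ : ℝ)| < (B' : ℝ) :=
                lt_of_le_of_lt hfd (by rw [hB'def]; push_cast; linarith)
              exact_mod_cast hreal
            rw [hl'] at hfl
            exact le_of_lt (floor_eq_dist_lt hr0 hfl)
        have hdq := hclose i i' hucl
        have hflr : ∀ l, ⌊x i l / r⌋ = ⌊x i' l / r⌋ := by
          intro l
          apply int_eq_of_zmod (congrFun hh l)
          have hco : |x i l - x i' l| ≤ C4 * r := by
            have h := dist_le_pi_dist (x i) (x i') l
            rw [Real.dist_eq] at h
            linarith
          have hfd := floor_diff_le hr0 hco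
          rw [mul_div_cancel_right₀ _ hr0.ne'] at hfd
          have hceil : C4 ≤ (⌈C4⌉₊ : ℝ) := Nat.le_ceil _
          have hreal : |(⌊x i l / r⌋ : ℝ) - (⌊x i' l / r⌋ : ℝ)| < (B : ℝ) :=
            lt_of_le_of_lt hfd (by rw [hBdef]; push_cast; linarith)
          exact_mod_cast hreal
        have hdlt : dist (x i) (x i') < r := by
          rw [dist_pi_lt_iff hr0]
          intro l
          rw [Real.dist_eq]
          exact floor_eq_dist_lt hr0 (hflr l)
        have := hxsep i i' hne
        linarith
      have hcard := Fintype.card_le_of_injective Φ hinj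
      have hcardT : Fintype.card (Fin d × Bool × (Fin (d - 1) → ZMod B') × (Fin d → ZMod B))
          = d * (2 * (B' ^ (d - 1) * B ^ d)) := by
        simp [Fintype.card_prod, Fintype.card_fun, ZMod.card, Fintype.card_fin]
      rw [Fintype.card_fin, hcardT] at hcard
      have hB'le : (B' : ℝ) ≤ 7 / r := by
        rw [hB'def]
        push_cast
        have hceil : (⌈1/r⌉₊ : ℝ) < 1/r + 1 := Nat.ceil_lt_add_one (by positivity)
        have he : (7:ℝ)/r = 2*(1/r) + 5*(1/r) := by ring
        have h5 : (5:ℝ) ≤ 5 * (1/r) := by linarith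
        linarith
      have hk : (k:ℝ) ≤ (d:ℝ) * (2 * ((B':ℝ) ^ (d-1) * (B:ℝ) ^ d)) := by exact_mod_cast hcard
      have hfin : (B':ℝ)^(d-1) ≤ 7^(d-1) * (1/r)^(d-1) := by
        calc (B':ℝ)^(d-1) ≤ (7/r)^(d-1) := pow_le_pow_left₀ (by positivity) hB'le _
          _ = 7^(d-1)*(1/r)^(d-1) := by rw [div_eq_mul_one_div, mul_pow]
      calc (k:ℝ) ≤ (d:ℝ) * (2 * ((B':ℝ)^(d-1) * (B:ℝ)^d)) := hk
        _ ≤ (d:ℝ) * (2 * ((7^(d-1)*(1/r)^(d-1)) * (B:ℝ)^d)) := by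
            apply mul_le_mul_of_nonneg_left _ (by positivity)
            apply mul_le_mul_of_nonneg_left _ (by norm_num)
            exact mul_le_mul_of_nonneg_right hfin (by positivity)
        _ = ((d:ℝ) * (2 * (7^(d-1) * (B:ℝ)^d))) * (1/r)^(d-1) := by ring
        _ ≤ Cst * (1/r)^(d-1) := by
            apply mul_le_mul_of_nonneg_right _ (by positivity)
            rw [hCstdef]
            have := pow_pos hB2pos d
            linarith
    · -- trivial branch : Δ/2 ≤ r
      haveI : NeZero B2 := ⟨by omega⟩
      set Ψ : Fin k → (Fin d → ZMod B2) := fun i l => ((⌊x i l / r⌋ : ℤ) : ZMod B2) with hΨdef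
      have hinj : Function.Injective Ψ := by
        intro i i' h
        by_contra hne
        have hflr : ∀ l, ⌊x i l / r⌋ = ⌊x i' l / r⌋ := by
          intro l
          have hcoordeq : ((⌊x i l / r⌋ : ℤ) : ZMod B2) = ((⌊x i' l / r⌋ : ℤ) : ZMod B2) := by
            exact congrFun h l
          apply int_eq_of_zmod hcoordeq
          have hco : |x i l - x i' l| ≤ 1 := by
            obtain ⟨h0, h1⟩ := hcoord _ (hxc i) l
            obtain ⟨h0', h1'⟩ := hcoord _ (hxc i') l
            rw [abs_le]; constructor <;> linarith
          have hfd := floor_diff_le hr0 hco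
          have h2Δ : 1 / r ≤ 2 / Δ := by
            rw [div_le_div_iff₀ hr0 hΔ]
            have := not_lt.mp hsmall
            linarith
          have hceil : (2:ℝ) / Δ ≤ (⌈2/Δ⌉₊ : ℝ) := Nat.le_ceil _
          have hreal : |(⌊x i l / r⌋:ℝ) - (⌊x i' l / r⌋:ℝ)| < (B2:ℝ) := by
            rw [hB2def]; push_cast; linarith
          exact_mod_cast hreal
        have hdlt : dist (x i) (x i') < r := by
          rw [dist_pi_lt_iff hr0]
          intro l
          rw [Real.dist_eq]
          exact floor_eq_dist_lt hr0 (hflr l)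
        have := hxsep i i' hne
        linarith
      have hcard := Fintype.card_le_of_injective Ψ hinj
      simp only [Fintype.card_fun, ZMod.card, Fintype.card_fin] at hcard
      have hkB2 : (k : ℝ) ≤ (B2:ℝ) ^ d := by exact_mod_cast hcard
      have hACst : (0:ℝ) ≤ (d : ℝ) * (2 * (7 ^ (d - 1) * (B : ℝ) ^ d)) := by positivity
      have hB2C : ((B2:ℝ)) ^ d ≤ Cst := by rw [hCstdef]; linarith
      calc (k:ℝ) ≤ (B2:ℝ) ^ d := hkB2
        _ = (B2:ℝ) ^ d * 1 := by ring
        _ ≤ Cst * (1 / r) ^ (d - 1) :=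
            mul_le_mul hB2C hpowinv zero_le_one (le_trans (by positivity) hB2C)
  -- wrap up via sSup
  have hsup : packingNumber {x ∈ unitCube d | |f x - a| ≤ r} r ≤ ⌊Cst * (1 / r) ^ (d - 1)⌋₊ := by
    apply csSup_le'
    rintro k ⟨x, hxE, hxsep⟩
    exact Nat.le_floor (hcount k x hxE hxsep)
  calc (packingNumber {x ∈ unitCube d | |f x - a| ≤ r} r : ℝ)
      ≤ (⌊Cst * (1 / r) ^ (d - 1)⌋₊ : ℝ) := by exact_mod_cast hsup
    _ ≤ Cst * (1 / r) ^ (d - 1) := Nat.floor_le (by positivity)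
end
end

section
/- Let d ≥ 1, a ∈ ℝ, c > 0, γ ∈ (0,1], Δ > 0, and let f : [0,1]^d → ℝ be a convex (c,γ)-Hölder function whose level set {f = a} is Δ-proper. Let x* be a minimizer of f (necessarily x* ∈ (0,1)^d). For each unit vector z in the Euclidean unit sphere S^{d−1} ⊆ ℝ^d, let p_z be the unique point of ∂[0,1]^d with (p_z − x*)/‖p_z − x*‖₂ = z; then there is a unique t_z ∈ [0, ‖x* − p_z‖₂] with f(x* + t_z·z) = a, and the function s : S^{d−1} → ℝ, s(z) := t_z, satisfies |s(z₁) − s(z₂)| ≤ max(6√d/π, (c/Δ)^{1/γ}·d)·θ(z₁,z₂) for all z₁, z₂ ∈ S^{d−1}, where θ(z₁,z₂) := arccos(⟨z₁,z₂⟩) is the geodesic distance on S^{d−1}. -/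
noncomputable section

/-- The Euclidean norm on `Fin d → ℝ`. -/
noncomputable def eNorm {d : ℕ} (x : Fin d → ℝ) : ℝ := Real.sqrt (∑ j, x j ^ 2)

/-- The Euclidean inner product on `Fin d → ℝ`. -/
def eInner {d : ℕ} (x y : Fin d → ℝ) : ℝ := ∑ j, x j * y j

set_option maxHeartbeats 1000000

namespace Stmt19Aux
variable {d : ℕ}

variable {d : ℕ}

lemma sumSq_nonneg (x : Fin d → ℝ) : 0 ≤ ∑ j, x j ^ 2 :=
  Finset.sum_nonneg fun j _ => sq_nonneg _

lemma eNorm_nonneg (x : Fin d → ℝ) : 0 ≤ eNorm x := Real.sqrt_nonneg _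

lemma eNorm_sq (x : Fin d → ℝ) : eNorm x ^ 2 = ∑ j, x j ^ 2 := Real.sq_sqrt (sumSq_nonneg x)

lemma eNorm_eq_zero {x : Fin d → ℝ} (h : eNorm x = 0) : x = 0 := by
  have h2 : ∑ j, x j ^ 2 = 0 := by
    rw [← eNorm_sq, h]; norm_num
  funext j
  have := (Finset.sum_eq_zero_iff_of_nonneg (fun i _ => sq_nonneg (x i))).mp h2 j
    (Finset.mem_univ j)
  exact (pow_eq_zero_iff (two_ne_zero)).mp this

lemma eNorm_smul (t : ℝ) (x : Fin d → ℝ) : eNorm (t • x) = |t| * eNorm x := by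
  unfold eNorm
  rw [← Real.sqrt_sq_eq_abs, ← Real.sqrt_mul (sq_nonneg t)]
  congr 1
  rw [Finset.mul_sum]
  exact Finset.sum_congr rfl fun j _ => by simp [smul_eq_mul]; ring

lemma eNorm_sub_comm (x y : Fin d → ℝ) : eNorm (x - y) = eNorm (y - x) := by
  unfold eNorm; congr 1
  exact Finset.sum_congr rfl fun j _ => by simp [Pi.sub_apply]; ring

lemma norm_le_eNorm (x : Fin d → ℝ) : ‖x‖ ≤ eNorm x := by
  rw [pi_norm_le_iff_of_nonneg (eNorm_nonneg x)]
  intro j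
  rw [Real.norm_eq_abs, ← Real.sqrt_sq_eq_abs]
  exact Real.sqrt_le_sqrt (Finset.single_le_sum (fun i _ => sq_nonneg (x i)) (Finset.mem_univ j))

lemma eNorm_le_sqrt {x : Fin d → ℝ} (h : ∀ j, |x j| ≤ 1) : eNorm x ≤ Real.sqrt d := by
  unfold eNorm
  apply Real.sqrt_le_sqrt
  calc ∑ j, x j ^ 2 ≤ ∑ _j : Fin d, (1:ℝ) :=
        Finset.sum_le_sum fun j _ => by nlinarith [h j, abs_nonneg (x j), sq_abs (x j)]
    _ = d := by simp

lemma chord_le_arc {z1 z2 : Fin d → ℝ} (h1 : eNorm z1 = 1) (h2 : eNorm z2 = 1) :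
    eNorm (z1 - z2) ≤ Real.arccos (eInner z1 z2) := by
  have hs1 : ∑ j, z1 j ^ 2 = 1 := by rw [← eNorm_sq, h1]; norm_num
  have hs2 : ∑ j, z2 j ^ 2 = 1 := by rw [← eNorm_sq, h2]; norm_num
  have hsub : eNorm (z1 - z2) ^ 2 = 2 - 2 * eInner z1 z2 := by
    rw [eNorm_sq]
    have he : ∀ j : Fin d, (z1 - z2) j ^ 2 = (z1 j ^ 2 + z2 j ^ 2) - 2 * (z1 j * z2 j) :=
      fun j => by simp [Pi.sub_apply]; ring
    rw [Finset.sum_congr rfl fun j _ => he j, Finset.sum_sub_distrib, Finset.sum_add_distrib,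
      ← Finset.mul_sum, hs1, hs2]
    unfold eInner; ring
  have hadd : eNorm (z1 + z2) ^ 2 = 2 + 2 * eInner z1 z2 := by
    rw [eNorm_sq]
    have he : ∀ j : Fin d, (z1 + z2) j ^ 2 = (z1 j ^ 2 + z2 j ^ 2) + 2 * (z1 j * z2 j) :=
      fun j => by simp [Pi.add_apply]; ring
    rw [Finset.sum_congr rfl fun j _ => he j, Finset.sum_add_distrib, Finset.sum_add_distrib,
      ← Finset.mul_sum, hs1, hs2]
    unfold eInner; ring
  have hnn1 : 0 ≤ eNorm (z1 - z2) ^ 2 := sq_nonneg _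
  have hnn2 : 0 ≤ eNorm (z1 + z2) ^ 2 := sq_nonneg _
  have hι1 : eInner z1 z2 ≤ 1 := by nlinarith
  have hι2 : -1 ≤ eInner z1 z2 := by nlinarith
  set θ := Real.arccos (eInner z1 z2) with hθ
  have hcos : Real.cos θ = eInner z1 z2 := Real.cos_arccos hι2 hι1
  have hθ0 : 0 ≤ θ := Real.arccos_nonneg _
  have hθπ : θ ≤ Real.pi := Real.arccos_le_pi _
  have hpi := Real.pi_pos
  have hsin_le : Real.sin (θ/2) ≤ θ/2 := Real.sin_le (by linarith)
  have hsin_nn : 0 ≤ Real.sin (θ/2) :=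
    Real.sin_nonneg_of_nonneg_of_le_pi (by linarith) (by linarith)
  have hcos2 : Real.cos θ = 1 - 2 * Real.sin (θ/2) ^ 2 := by
    have h := Real.cos_two_mul (θ/2)
    rw [show 2 * (θ/2) = θ by ring] at h
    have h2 := Real.sin_sq_add_cos_sq (θ/2)
    linarith
  have hkey : eNorm (z1 - z2) ^ 2 ≤ θ ^ 2 := by
    rw [hsub, ← hcos, hcos2]; nlinarith
  nlinarith [eNorm_nonneg (z1 - z2)]

lemma holder_continuousOn {c γ : ℝ} (hc : 0 < c) (hγ : 0 < γ) {E : Set (Fin d → ℝ)}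
    {f : (Fin d → ℝ) → ℝ} (hf : HolderOn d c γ E f) : ContinuousOn f E := by
  rw [Metric.continuousOn_iff]
  intro x hx ε hε
  refine ⟨(ε / (2 * c)) ^ (1/γ), Real.rpow_pos_of_pos (by positivity) _, fun y hy hdist => ?_⟩
  have h1 : |f y - f x| ≤ c * ‖y - x‖ ^ γ := hf y hy x hx
  have h2 : ‖y - x‖ ^ γ ≤ ((ε / (2*c)) ^ (1/γ)) ^ γ := by
    apply Real.rpow_le_rpow (norm_nonneg _) _ hγ.le
    rw [← dist_eq_norm]; exact hdist.le
  have h3 : ((ε / (2*c)) ^ (1/γ)) ^ γ = ε / (2*c) := by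
    rw [← Real.rpow_mul (by positivity), one_div, inv_mul_cancel₀ (ne_of_gt hγ), Real.rpow_one]
  rw [Real.dist_eq]
  have h4 : c * (ε / (2*c)) = ε / 2 := by field_simp
  calc |f y - f x| ≤ c * ‖y - x‖ ^ γ := h1
    _ ≤ c * (ε / (2*c)) := by rw [← h3]; exact mul_le_mul_of_nonneg_left h2 hc.le
    _ < ε := by rw [h4]; linarith

lemma mem_cube {x : Fin d → ℝ} : x ∈ unitCube d ↔ ∀ j, 0 ≤ x j ∧ x j ≤ 1 := by
  simp [unitCube, Set.mem_Icc, Pi.le_def, forall_and]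

lemma interior_cube : interior (unitCube d) = {x | ∀ j, x j ∈ Set.Ioo (0:ℝ) 1} := by
  have h : unitCube d = Set.pi Set.univ (fun _ : Fin d => Set.Icc (0:ℝ) 1) :=
    (Set.pi_univ_Icc _ _).symm
  rw [h, interior_pi_set Set.finite_univ]
  ext x; simp [Set.mem_pi, interior_Icc]

end Stmt19Aux

open Stmt19Aux

/-- For a convex `(c,γ)`-Hölder `f` with a `Δ`-proper level set and
minimizer `x*` (necessarily interior), for every Euclidean-unit direction `z` there is a
unique boundary point `p_z` in direction `z` from `x*`, a unique `t_z ∈ [0, ‖x* - p_z‖₂]`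
with `f(x* + t_z z) = a`, and `z ↦ t_z` is Lipschitz with constant
`max(6√d/π, (c/Δ)^{1/γ} d)` w.r.t. the geodesic distance `θ(z₁,z₂) = arccos⟨z₁,z₂⟩`. -/
theorem stmt19 (d : ℕ) (hd : 1 ≤ d) (a c γ Δ : ℝ) (hc : 0 < c)
    (hγ : γ ∈ Set.Ioc (0 : ℝ) 1) (hΔ : 0 < Δ) (f : (Fin d → ℝ) → ℝ)
    (hconv : ConvexOn ℝ (unitCube d) f)
    (hhold : HolderOn d c γ (unitCube d) f)
    (hproper : ProperLevelSet d f a Δ)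
    (xs : Fin d → ℝ) (hxs : xs ∈ unitCube d) (hmin : ∀ x ∈ unitCube d, f xs ≤ f x) :
    xs ∈ interior (unitCube d) ∧
    ∃ p : (Fin d → ℝ) → (Fin d → ℝ), ∃ s : (Fin d → ℝ) → ℝ,
      (∀ z : Fin d → ℝ, eNorm z = 1 →
        (p z ∈ frontier (unitCube d) ∧ p z - xs = eNorm (p z - xs) • z) ∧
        (∀ q ∈ frontier (unitCube d), q - xs = eNorm (q - xs) • z → q = p z) ∧
        (s z ∈ Set.Icc 0 (eNorm (xs - p z)) ∧ f (xs + s z • z) = a) ∧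
        (∀ t ∈ Set.Icc 0 (eNorm (xs - p z)), f (xs + t • z) = a → t = s z)) ∧
      ∀ z₁ z₂ : Fin d → ℝ, eNorm z₁ = 1 → eNorm z₂ = 1 →
        |s z₁ - s z₂| ≤ max (6 * Real.sqrt d / Real.pi) ((c / Δ) ^ (1 / γ) * d) *
          Real.arccos (eInner z₁ z₂) := by
  obtain ⟨hγ0, hγ1⟩ := hγ
  obtain ⟨-, ⟨x0, hx0c, hx0⟩, hbd⟩ := hproper
  have hcube_closed : IsClosed (unitCube d) := isClosed_Icc
  have hcube_convex : Convex ℝ (unitCube d) := convex_Icc _ _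
  have hfr : frontier (unitCube d) = unitCube d \ interior (unitCube d) :=
    hcube_closed.frontier_eq
  have hfxs : f xs + Δ ≤ a := by linarith [hmin x0 hx0c]
  have hxsint : xs ∈ interior (unitCube d) := by
    by_contra h
    have hmem : xs ∈ frontier (unitCube d) := by rw [hfr]; exact ⟨hxs, h⟩
    have := hbd xs hmem; linarith
  refine ⟨hxsint, ?_⟩
  have hcont : ContinuousOn f (unitCube d) := holder_continuousOn hc hγ0 hhold
  -- the inner radius r
  set r : ℝ := (Δ / c) ^ (1/γ) with hrdef
  have hΔc : 0 < Δ / c := div_pos hΔ hc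
  have hr_pos : 0 < r := Real.rpow_pos_of_pos hΔc _
  have hrγ : c * r ^ γ = Δ := by
    rw [hrdef, ← Real.rpow_mul hΔc.le, one_div, inv_mul_cancel₀ (ne_of_gt hγ0), Real.rpow_one]
    field_simp
  clear_value r
  -- coordinates of xs are at distance ≥ r from the boundary
  have hcoord : ∀ j, r ≤ xs j ∧ xs j ≤ 1 - r := by
    intro j
    obtain ⟨hxj0, hxj1⟩ := mem_cube.mp hxs j
    have key : ∀ b : ℝ, (b = 0 ∨ b = 1) → |b - xs j| < r → False := by
      intro b hb hblt
      set q := Function.update xs j b with hq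
      have hqc : q ∈ unitCube d := mem_cube.mpr fun i => by
        rcases eq_or_ne i j with rfl | hij
        · rcases hb with rfl | rfl <;> simp [hq]
        · rw [hq, Function.update_of_ne hij]; exact mem_cube.mp hxs i
      have hqint : q ∉ interior (unitCube d) := by
        rw [interior_cube]; intro hmem
        have := hmem j
        rcases hb with rfl | rfl <;> simp [hq] at this
      have hqa : a ≤ f q := hbd q (by rw [hfr]; exact ⟨hqc, hqint⟩)
      have hnorm : ‖q - xs‖ ≤ |b - xs j| := by
        rw [pi_norm_le_iff_of_nonneg (abs_nonneg _)]
        intro i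
        rcases eq_or_ne i j with rfl | hij
        · simp [hq, Real.norm_eq_abs]
        · simp [hq, Function.update_of_ne hij]
      have hh := hhold q hqc xs hxs
      have hlt2 : c * ‖q - xs‖ ^ γ < Δ := by
        rw [← hrγ]
        have h1 : ‖q - xs‖ ^ γ < r ^ γ :=
          lt_of_le_of_lt (Real.rpow_le_rpow (norm_nonneg _) hnorm hγ0.le)
            (Real.rpow_lt_rpow (abs_nonneg _) hblt hγ0)
        exact (mul_lt_mul_iff_right₀ hc).mpr h1
      have : f q - f xs < Δ := lt_of_le_of_lt (le_trans (le_abs_self _) hh) hlt2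
      linarith
    constructor
    · by_contra hlt; push_neg at hlt
      exact key 0 (Or.inl rfl) (by rw [abs_of_nonpos (by linarith)]; linarith)
    · by_contra hlt; push_neg at hlt
      exact key 1 (Or.inr rfl) (by rw [abs_of_nonneg (by linarith)]; linarith)
  -- the sup-ball of radius r around xs is inside the cube and f ≤ a on it
  have hball : ∀ u : Fin d → ℝ, ‖u‖ ≤ r → (xs + u ∈ unitCube d ∧ f (xs + u) ≤ a) := by
    intro u hu
    have hmemc : xs + u ∈ unitCube d := mem_cube.mpr fun j => by
      have hj : |u j| ≤ r := le_trans (by simpa [Real.norm_eq_abs] using norm_le_pi_norm u j) hu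
      obtain ⟨h1, h2⟩ := hcoord j
      rw [abs_le] at hj
      constructor <;> simp only [Pi.add_apply] <;> linarith [hj.1, hj.2]
    refine ⟨hmemc, ?_⟩
    have hh := hhold (xs + u) hmemc xs hxs
    rw [add_sub_cancel_left] at hh
    have h2 : c * ‖u‖ ^ γ ≤ Δ := by
      rw [← hrγ]
      exact mul_le_mul_of_nonneg_left (Real.rpow_le_rpow (norm_nonneg _) hu hγ0.le) hc.le
    have := le_trans (le_abs_self _) hh
    linarith
  have perz : ∀ z : Fin d → ℝ, ∃ (pz : Fin d → ℝ) (tz : ℝ), eNorm z = 1 →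
      (((pz ∈ frontier (unitCube d) ∧ pz - xs = eNorm (pz - xs) • z) ∧
        (∀ q ∈ frontier (unitCube d), q - xs = eNorm (q - xs) • z → q = pz) ∧
        (tz ∈ Set.Icc 0 (eNorm (xs - pz)) ∧ f (xs + tz • z) = a) ∧
        (∀ t ∈ Set.Icc 0 (eNorm (xs - pz)), f (xs + t • z) = a → t = tz)) ∧
       (xs + tz • z ∈ unitCube d)) := by
    intro z
    by_cases hz : eNorm z = 1
    swap
    · exact ⟨0, 0, fun h => absurd h hz⟩
    have hzinf : ‖z‖ ≤ 1 := le_trans (norm_le_eNorm z) (le_of_eq hz)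
    have hz0 : z ≠ 0 := by
      intro h
      rw [h] at hz
      simp [eNorm] at hz
    have hzpos : 0 < ‖z‖ := norm_pos_iff.mpr hz0
    set A : Set ℝ := {t | 0 ≤ t ∧ xs + t • z ∈ unitCube d} with hA
    have h0A : (0:ℝ) ∈ A := ⟨le_refl 0, by simpa using hxs⟩
    have hnorm_cube : ∀ x ∈ unitCube d, ‖x‖ ≤ 1 := by
      intro x hxc
      rw [pi_norm_le_iff_of_nonneg zero_le_one]
      intro j
      obtain ⟨ha1, ha2⟩ := mem_cube.mp hxc j
      rw [Real.norm_eq_abs, abs_le]; exact ⟨by linarith, ha2⟩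
    have hAbdd : BddAbove A := by
      refine ⟨2 / ‖z‖, fun t ht => ?_⟩
      have h3 : ‖t • z‖ ≤ 2 := by
        calc ‖t • z‖ = ‖(xs + t • z) - xs‖ := by rw [add_sub_cancel_left]
          _ ≤ ‖xs + t • z‖ + ‖xs‖ := norm_sub_le _ _
          _ ≤ 2 := by linarith [hnorm_cube _ ht.2, hnorm_cube _ hxs]
      rw [norm_smul, Real.norm_eq_abs, abs_of_nonneg ht.1] at h3
      rw [le_div_iff₀ hzpos]; exact h3
    have hAclosed : IsClosed A := by
      have h2 : IsClosed {t : ℝ | xs + t • z ∈ unitCube d} :=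
        IsClosed.preimage (continuous_const.add (continuous_id.smul continuous_const)) hcube_closed
      exact isClosed_Ici.inter h2
    set T := sSup A with hT
    have hTA : T ∈ A := hAclosed.csSup_mem ⟨0, h0A⟩ hAbdd
    have hT0 : 0 ≤ T := hTA.1
    have hAconv : Convex ℝ A := by
      intro u hu v hv a' b' ha' hb' hab
      refine ⟨add_nonneg (mul_nonneg ha' hu.1) (mul_nonneg hb' hv.1), ?_⟩
      have hcb : b' = 1 - a' := by linarith
      subst hcb
      have heq : xs + (a' * u + (1-a') * v) • z
          = a' • (xs + u • z) + (1-a') • (xs + v • z) := by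
        funext j
        simp only [Pi.add_apply, Pi.smul_apply, smul_eq_mul]
        ring
      show xs + (a' * u + (1 - a') * v) • z ∈ unitCube d
      rw [heq]
      exact hcube_convex hu.2 hv.2 ha' (by linarith) (by ring)
    have hIccA : Set.Icc (0:ℝ) T ⊆ A := by
      rw [← segment_eq_Icc hT0]
      exact hAconv.segment_subset h0A hTA
    set pz := xs + T • z with hpz
    have hpzc : pz ∈ unitCube d := hTA.2
    have hpz_not_int : pz ∉ interior (unitCube d) := by
      intro hint
      obtain ⟨ε, hε, hballs⟩ := Metric.mem_nhds_iff.mp (mem_interior_iff_mem_nhds.mp hint)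
      have hmem : T + ε/2 ∈ A := by
        refine ⟨by linarith, hballs ?_⟩
        rw [Metric.mem_ball, dist_eq_norm]
        have heq : xs + (T + ε/2) • z - pz = (ε/2) • z := by
          funext j
          simp only [hpz, Pi.sub_apply, Pi.add_apply, Pi.smul_apply, smul_eq_mul]
          ring
        rw [heq, norm_smul, Real.norm_eq_abs, abs_of_pos (by linarith)]
        nlinarith
      have := le_csSup hAbdd hmem
      linarith
    have hpzfr : pz ∈ frontier (unitCube d) := by rw [hfr]; exact ⟨hpzc, hpz_not_int⟩
    have hpzsub : pz - xs = T • z := by rw [hpz, add_sub_cancel_left]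
    have heT : eNorm (pz - xs) = T := by
      rw [hpzsub, eNorm_smul, hz, abs_of_nonneg hT0, mul_one]
    have hsub_eq : pz - xs = eNorm (pz - xs) • z := by rw [heT]; exact hpzsub
    have heTxs : eNorm (xs - pz) = T := by rw [eNorm_sub_comm]; exact heT
    have huniq : ∀ q ∈ frontier (unitCube d), q - xs = eNorm (q - xs) • z → q = pz := by
      intro q hq hqe
      set ρ := eNorm (q - xs) with hρ
      have hq_eq : q = xs + ρ • z := sub_eq_iff_eq_add'.mp hqe
      have hqc : q ∈ unitCube d := by rw [hfr] at hq; exact hq.1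
      have hρA : ρ ∈ A := ⟨eNorm_nonneg _, by rw [← hq_eq]; exact hqc⟩
      have hρT : ρ ≤ T := le_csSup hAbdd hρA
      rcases eq_or_lt_of_le hρT with heq | hlt
      · rw [hq_eq, heq, hpz]
      · exfalso
        have hTpos : 0 < T := lt_of_le_of_lt (eNorm_nonneg _) hlt
        have hcombo : q = (1 - ρ/T) • xs + (ρ/T) • pz := by
          funext j
          rw [hq_eq]
          simp only [hpz, Pi.add_apply, Pi.smul_apply, smul_eq_mul]
          field_simp
          ring
        have hqint : q ∈ interior (unitCube d) := by
          rw [hcombo]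
          refine hcube_convex.combo_interior_self_mem_interior hxsint hpzc ?_
            (div_nonneg (eNorm_nonneg _) hT0) (by field_simp; ring)
          rw [sub_pos, div_lt_one hTpos]; exact hlt
        rw [hfr] at hq; exact hq.2 hqint
    have hmaps : ∀ t ∈ Set.Icc (0:ℝ) T, xs + t • z ∈ unitCube d := fun t ht => (hIccA ht).2
    have hgcont : ContinuousOn (fun t : ℝ => f (xs + t • z)) (Set.Icc 0 T) := by
      apply ContinuousOn.comp hcont _ hmaps
      exact Continuous.continuousOn (continuous_const.add (continuous_id.smul continuous_const))
    have hga : a ∈ Set.Icc (f (xs + (0:ℝ) • z)) (f (xs + T • z)) := by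
      constructor
      · simp only [zero_smul, add_zero]; linarith
      · exact hbd pz hpzfr
    obtain ⟨t, htIcc, hgt⟩ := intermediate_value_Icc hT0 hgcont hga
    have hlt_false : ∀ u v : ℝ, u ∈ Set.Icc (0:ℝ) T → v ∈ Set.Icc (0:ℝ) T →
        f (xs + u • z) = a → f (xs + v • z) = a → u < v → False := by
      intro u v hu hv hfu hfv huv
      have hv0 : 0 < v := lt_of_le_of_lt hu.1 huv
      have hμ : u / v < 1 := (div_lt_one hv0).mpr huv
      have hμ0 : 0 ≤ u / v := div_nonneg hu.1 hv0.le
      have hcombo : xs + u • z = (1 - u/v) • xs + (u/v) • (xs + v • z) := by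
        funext j
        simp only [Pi.add_apply, Pi.smul_apply, smul_eq_mul]
        field_simp
        ring
      have hconv2 := hconv.2 hxs (hmaps v hv) (by linarith : (0:ℝ) ≤ 1 - u/v) hμ0 (by ring)
      rw [← hcombo, hfu, hfv] at hconv2
      simp only [smul_eq_mul] at hconv2
      nlinarith [mul_nonneg (by linarith : (0:ℝ) ≤ 1 - u/v) (by linarith : (0:ℝ) ≤ a - Δ - f xs)]
    refine ⟨pz, t, fun _ => ⟨⟨⟨hpzfr, hsub_eq⟩, huniq,
      ⟨by rw [heTxs]; exact htIcc, hgt⟩, ?_⟩, (hIccA htIcc).2⟩⟩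
    intro t' ht' hft'
    rw [heTxs] at ht'
    rcases lt_trichotomy t' t with h | h | h
    · exact (hlt_false t' t ht' htIcc hft' hgt h).elim
    · exact h
    · exact (hlt_false t t' htIcc ht' hgt hft' h).elim
  choose p s hps using perz
  refine ⟨p, s, fun z hz => (hps z hz).1, ?_⟩
  have hscube : ∀ z, eNorm z = 1 → xs + s z • z ∈ unitCube d := fun z hz => (hps z hz).2
  have hsfa : ∀ z, eNorm z = 1 → f (xs + s z • z) = a := fun z hz => (hps z hz).1.2.2.1.2
  have hs0 : ∀ z, eNorm z = 1 → 0 ≤ s z := fun z hz => ((hps z hz).1.2.2.1.1).1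
  have hsd : ∀ z, eNorm z = 1 → s z ≤ Real.sqrt d := by
    intro z hz
    refine le_trans ((hps z hz).1.2.2.1.1).2 (eNorm_le_sqrt ?_)
    intro j
    have h1 := mem_cube.mp hxs j
    have hpzc : p z ∈ unitCube d := by
      have := (hps z hz).1.1.1
      rw [hfr] at this; exact this.1
    have h2 := mem_cube.mp hpzc j
    rw [abs_le, Pi.sub_apply]
    constructor <;> linarith [h1.1, h1.2, h2.1, h2.2]
  have hsr : ∀ z, eNorm z = 1 → r ≤ s z := by
    intro z hz
    have h1 := hhold (xs + s z • z) (hscube z hz) xs hxs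
    rw [hsfa z hz, add_sub_cancel_left] at h1
    have hzinf : ‖z‖ ≤ 1 := le_trans (norm_le_eNorm z) (le_of_eq hz)
    have hnorm : ‖s z • z‖ ≤ s z := by
      rw [norm_smul, Real.norm_eq_abs, abs_of_nonneg (hs0 z hz)]
      nlinarith [hs0 z hz]
    have h2 : Δ ≤ c * (s z) ^ γ := by
      have ha1 : Δ ≤ |a - f xs| := le_trans (by linarith) (le_abs_self _)
      refine le_trans ha1 (le_trans h1 ?_)
      exact mul_le_mul_of_nonneg_left (Real.rpow_le_rpow (norm_nonneg _) hnorm hγ0.le) hc.le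
    by_contra hlt
    push_neg at hlt
    have := Real.rpow_lt_rpow (hs0 z hz) hlt hγ0
    nlinarith
  set M := max (6 * Real.sqrt d / Real.pi) ((c / Δ) ^ (1 / γ) * d) with hM
  have hd1 : (1:ℝ) ≤ (d:ℝ) := by exact_mod_cast hd
  have hMd : (d:ℝ) / r ≤ M := by
    have heq : (c / Δ) ^ (1/γ) * d = d / r := by
      rw [show c / Δ = (Δ/c)⁻¹ from (inv_div Δ c).symm, Real.inv_rpow hΔc.le, ← hrdef]
      rw [div_eq_mul_inv, mul_comm]
    rw [hM, ← heq]
    exact le_max_right _ _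
  clear_value M
  have main : ∀ z₁ z₂ : Fin d → ℝ, eNorm z₁ = 1 → eNorm z₂ = 1 → s z₂ ≤ s z₁ →
      s z₁ - s z₂ ≤ M * Real.arccos (eInner z₁ z₂) := by
    intro z₁ z₂ h1 h2 h21
    set θ := Real.arccos (eInner z₁ z₂) with hθ
    clear_value θ
    have hθ0 : 0 ≤ θ := by rw [hθ]; exact Real.arccos_nonneg _
    have hchord : eNorm (z₁ - z₂) ≤ θ := by rw [hθ]; exact chord_le_arc h1 h2
    have hM0 : 0 ≤ M := le_trans (by positivity) hMd
    rcases eq_or_lt_of_le hθ0 with hθeq | hθpos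
    · have hez : eNorm (z₁ - z₂) = 0 :=
        le_antisymm (by rw [← hθeq] at hchord; exact hchord) (eNorm_nonneg _)
      have hz12 : z₁ = z₂ := sub_eq_zero.mp (eNorm_eq_zero hez)
      rw [hz12, sub_self]
      exact mul_nonneg hM0 hθ0
    · set s1 := s z₁ with hs1def
      set s2 := s z₂ with hs2def
      clear_value s1 s2
      have hs1r : r ≤ s1 := by rw [hs1def]; exact hsr z₁ h1
      have hs1pos : 0 < s1 := lt_of_lt_of_le hr_pos hs1r
      set D := s1 * θ + r with hD
      clear_value D
      have hDpos : 0 < D := by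
        have := mul_nonneg hs1pos.le hθ0
        rw [hD]; linarith
      set tstar := s1 * r / D with htstar
      clear_value tstar
      have htpos : 0 < tstar := by rw [htstar]; exact div_pos (mul_pos hs1pos hr_pos) hDpos
      have hts1 : tstar ≤ s1 := by
        rw [htstar, div_le_iff₀ hDpos, hD]
        nlinarith [mul_nonneg (mul_nonneg hs1pos.le hs1pos.le) hθ0]
      -- the auxiliary point w in the inner ball
      have hwball : ‖(r/θ) • (z₂ - z₁)‖ ≤ r := by
        rw [norm_smul, Real.norm_eq_abs, abs_of_pos (div_pos hr_pos hθpos)]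
        have h3 : ‖z₂ - z₁‖ ≤ θ := le_trans (norm_le_eNorm _)
          (by rw [eNorm_sub_comm]; exact hchord)
        calc r/θ * ‖z₂ - z₁‖ ≤ r/θ * θ := by
              exact mul_le_mul_of_nonneg_left h3 (div_pos hr_pos hθpos).le
          _ = r := by field_simp
      obtain ⟨hwcube, hfw⟩ := hball _ hwball
      set w := xs + (r/θ) • (z₂ - z₁) with hw
      have hx1cube : xs + s1 • z₁ ∈ unitCube d := by rw [hs1def]; exact hscube z₁ h1
      have hfx1 : f (xs + s1 • z₁) = a := by rw [hs1def]; exact hsfa z₁ h1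
      set lam := r / D with hlam
      clear_value lam
      have hlam0 : 0 < lam := by rw [hlam]; exact div_pos hr_pos hDpos
      have hD2 : 0 < s1 * θ + r := by rw [hD] at hDpos; exact hDpos
      have h1lam : 1 - lam = s1 * θ / D := by
        rw [hlam, hD]; field_simp; ring
      have h1lam0 : 0 ≤ 1 - lam := by
        rw [h1lam]; positivity
      have hcombo : xs + tstar • z₂ = lam • (xs + s1 • z₁) + (1 - lam) • w := by
        rw [h1lam, htstar, hlam, hw, hD]
        funext j
        simp only [Pi.add_apply, Pi.smul_apply, Pi.sub_apply, smul_eq_mul]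
        field_simp
        ring
      have hycube : xs + tstar • z₂ ∈ unitCube d := by
        rw [hcombo]
        exact hcube_convex hx1cube hwcube hlam0.le h1lam0 (by ring)
      have hfy : f (xs + tstar • z₂) ≤ a := by
        have h4 := hconv.2 hx1cube hwcube hlam0.le h1lam0 (by ring)
        rw [← hcombo, hfx1] at h4
        simp only [smul_eq_mul] at h4
        nlinarith [mul_nonneg h1lam0 (by linarith : (0:ℝ) ≤ a - f w)]
      have hts2 : tstar ≤ s2 := by
        by_contra hlt
        push_neg at hlt
        have hs20 : 0 ≤ s2 := by rw [hs2def]; exact hs0 z₂ h2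
        have hfs2 : f (xs + s2 • z₂) = a := by rw [hs2def]; exact hsfa z₂ h2
        have hμ0 : 0 ≤ s2 / tstar := div_nonneg hs20 htpos.le
        have hμ1 : s2 / tstar < 1 := (div_lt_one htpos).mpr hlt
        have hcombo2 : xs + s2 • z₂ = (1 - s2/tstar) • xs + (s2/tstar) • (xs + tstar • z₂) := by
          funext j
          simp only [Pi.add_apply, Pi.smul_apply, smul_eq_mul]
          field_simp
          ring
        have h4 := hconv.2 hxs hycube (by linarith : (0:ℝ) ≤ 1 - s2/tstar) hμ0 (by ring)
        rw [← hcombo2, hfs2] at h4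
        simp only [smul_eq_mul] at h4
        nlinarith [mul_nonneg (by linarith : (0:ℝ) ≤ 1 - s2/tstar)
          (by linarith : (0:ℝ) ≤ a - Δ - f xs),
          mul_nonneg hμ0 (by linarith : (0:ℝ) ≤ a - f (xs + tstar • z₂))]
      have h5 : s1 - tstar = s1 * (s1 * θ) / D := by
        rw [htstar, hD]; field_simp; ring
      have hsq : s1 * s1 ≤ (d:ℝ) := by
        have := hsd z₁ h1
        nlinarith [Real.sq_sqrt (by positivity : (0:ℝ) ≤ (d:ℝ)), Real.sqrt_nonneg (d:ℝ)]
      calc s1 - s2 ≤ s1 - tstar := by linarith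
        _ = s1 * (s1 * θ) / D := h5
        _ ≤ s1 * (s1 * θ) / r := by
            refine (div_le_div_iff_of_pos_left (by positivity) hDpos hr_pos).mpr ?_
            rw [hD]; nlinarith [mul_nonneg hs1pos.le hθ0]
        _ = s1 * s1 * θ / r := by ring
        _ ≤ (d:ℝ) * θ / r := by
            exact (div_le_div_iff_of_pos_right hr_pos).mpr (mul_le_mul_of_nonneg_right hsq hθ0)
        _ = ((d:ℝ) / r) * θ := by ring
        _ ≤ M * θ := mul_le_mul_of_nonneg_right hMd hθ0
  intro z₁ z₂ h1 h2
  have hsym : eInner z₂ z₁ = eInner z₁ z₂ :=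
    Finset.sum_congr rfl fun j _ => mul_comm _ _
  rcases le_total (s z₂) (s z₁) with h | h
  · rw [abs_of_nonneg (by linarith)]
    exact main z₁ z₂ h1 h2 h
  · rw [abs_of_nonpos (by linarith)]
    have := main z₂ z₁ h2 h1 h
    rw [hsym] at this
    linarith
end
end
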